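/- Let R = K[x₁,…,x₅] and let φ be a 5×5 alternating matrix of linear forms with submaximal Pfaffians p₁,…,p₅. Suppose the Jacobian matrix (∂p_i/∂x_j) has nonzero determinant (as a polynomial). Then the quartics {p_i p_j : 1 ≤ i ≤ j ≤ 5} are linearly independent over K. -/

import Mathlib

/-- The Pfaffian of a `4 × 4` alternating matrix, determined by its upper-triangular entries. -/
def pfaffian4 {R : Type} [CommRing R] (N : Matrix (Fin 4) (Fin 4) R) : R :=
  N 0 1 * N 2 3 - N 0 2 * N 1 3 + N 0 3 * N 1 2

/-- The `i`-th (signed) submaximal Pfaffian of a `5 × 5` alternating matrix `φ`. -/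
def subPfaffian {R : Type} [CommRing R] (φ : Matrix (Fin 5) (Fin 5) R) (i : Fin 5) : R :=
  (-1) ^ (i : ℕ) * pfaffian4 (φ.submatrix i.succAbove i.succAbove)

open MvPolynomial

lemma aux_sum_dite_subtype {α β : Type*} [Fintype α] [AddCommMonoid β] (P : α → Prop)
    [DecidablePred P] (F : Subtype P → β) :
    ∑ s : Subtype P, F s = ∑ a : α, if h : P a then F ⟨a, h⟩ else 0 := by
  classical
  have h1 : ∑ a ∈ Finset.univ.filter P, (if h : P a then F ⟨a, h⟩ else 0)
      = ∑ s : Subtype P, (if h : P (s : α) then F s else 0) := by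
    rw [Finset.sum_subtype (p := P) _ (by simp) (fun a => if h : P a then F ⟨a, h⟩ else 0)]
  rw [Finset.sum_filter] at h1
  have h2 : ∑ s : Subtype P, (if h : P (s : α) then F s else 0) = ∑ s : Subtype P, F s :=
    Finset.sum_congr rfl fun s _ => dif_pos s.2
  rw [← h2, ← h1]
  exact Finset.sum_congr rfl fun a _ => by by_cases h : P a <;> simp [h]

lemma aux_pfaff_indep {K : Type} [Field K]
    (p : Fin 5 → MvPolynomial (Fin 5) K)
    (hjac : (Matrix.of fun i j : Fin 5 => MvPolynomial.pderiv j (p i)).det ≠ 0)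
    (a : Fin 5 → K) (ha : ∑ i, MvPolynomial.C (a i) * p i = 0) : a = 0 := by
  have hv : Matrix.vecMul (fun i => (MvPolynomial.C (a i) : MvPolynomial (Fin 5) K))
      (Matrix.of fun i j : Fin 5 => MvPolynomial.pderiv j (p i)) = 0 := by
    funext t
    have h := congrArg (MvPolynomial.pderiv t) ha
    rw [map_sum, map_zero] at h
    simp only [MvPolynomial.pderiv_mul, MvPolynomial.pderiv_C, zero_mul, zero_add] at h
    simpa [Matrix.vecMul, dotProduct] using h
  have h0 := Matrix.eq_zero_of_vecMul_eq_zero hjac hv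
  funext i
  have := congrFun h0 i
  simpa using this

set_option maxHeartbeats 1000000 in
/-- Let `R = K[x₁, …, x₅]` and let `φ` be a `5 × 5` alternating matrix of
linear forms with submaximal Pfaffians `p₁, …, p₅`.  Suppose the Jacobian matrix `(∂p_i/∂x_j)`
has nonzero determinant.  Then the quartics `{p_i p_j : 1 ≤ i ≤ j ≤ 5}` are linearly
independent over `K`. -/
theorem products_of_pfaffians_linearly_independent
    {K : Type} [Field K] (h2 : (2 : K) ≠ 0)
    (φ : Matrix (Fin 5) (Fin 5) (MvPolynomial (Fin 5) K))
    (hlin : ∀ i j, (φ i j).IsHomogeneous 1)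
    (hskew : ∀ i j, φ j i = -φ i j)
    (hjac : (Matrix.of fun i j : Fin 5 =>
      MvPolynomial.pderiv j (subPfaffian φ i)).det ≠ 0) :
    LinearIndependent K (fun s : {ij : Fin 5 × Fin 5 // ij.1 ≤ ij.2} =>
      subPfaffian φ s.val.1 * subPfaffian φ s.val.2) := by
  classical
  set p : Fin 5 → MvPolynomial (Fin 5) K := subPfaffian φ with hp
  rw [Fintype.linearIndependent_iff]
  intro g hg
  set d : Fin 5 → Fin 5 → K := fun i j => if h : i ≤ j then g ⟨(i, j), h⟩ else 0 with hd
  -- rewrite the relation as a full double sum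
  have hg2 : ∑ i : Fin 5, ∑ j : Fin 5, C (d i j) * (p i * p j) = 0 := by
    have hsub := aux_sum_dite_subtype (fun ij : Fin 5 × Fin 5 => ij.1 ≤ ij.2)
        (fun s => g s • (p s.val.1 * p s.val.2))
    rw [hsub] at hg
    have hprod : ∑ ij : Fin 5 × Fin 5, C (d ij.1 ij.2) * (p ij.1 * p ij.2) = 0 := by
      rw [← hg]
      refine Finset.sum_congr rfl fun ij _ => ?_
      by_cases h : ij.1 ≤ ij.2
      · rw [hd]
        simp only [dif_pos h]
        rw [smul_eq_C_mul]
      · rw [hd]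
        simp only [dif_neg h]
        simp
    rw [Fintype.sum_prod_type] at hprod
    exact hprod
  -- differentiate
  have key : ∀ t : Fin 5,
      ∑ k, (∑ i, C (d k i + d i k) * p i) * pderiv t (p k)
        = ∑ i, ∑ j, C (d i j) * (pderiv t (p i) * p j + p i * pderiv t (p j)) := by
    intro t
    have e1 : ∀ k, (∑ i, C (d k i + d i k) * p i) * pderiv t (p k)
        = (∑ i, C (d k i) * (pderiv t (p k) * p i))
          + ∑ i, C (d i k) * (p i * pderiv t (p k)) := by
      intro k
      rw [Finset.sum_mul, ← Finset.sum_add_distrib]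
      refine Finset.sum_congr rfl fun i _ => ?_
      rw [map_add]; ring
    calc ∑ k, (∑ i, C (d k i + d i k) * p i) * pderiv t (p k)
        = (∑ k, ∑ i, C (d k i) * (pderiv t (p k) * p i))
          + ∑ k, ∑ i, C (d i k) * (p i * pderiv t (p k)) := by
          rw [← Finset.sum_add_distrib]
          exact Finset.sum_congr rfl fun k _ => e1 k
      _ = (∑ i, ∑ j, C (d i j) * (pderiv t (p i) * p j))
          + ∑ i, ∑ j, C (d i j) * (p i * pderiv t (p j)) := by
          exact congrArg₂ (· + ·) rfl Finset.sum_comm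
      _ = ∑ i, ∑ j, C (d i j) * (pderiv t (p i) * p j + p i * pderiv t (p j)) := by
          rw [← Finset.sum_add_distrib]
          refine Finset.sum_congr rfl fun i _ => ?_
          rw [← Finset.sum_add_distrib]
          exact Finset.sum_congr rfl fun j _ => (mul_add _ _ _).symm
  have hG : Matrix.vecMul (fun k => ∑ i, C (d k i + d i k) * p i)
      (Matrix.of fun i j : Fin 5 => MvPolynomial.pderiv j (p i)) = 0 := by
    funext t
    have h := congrArg (pderiv t) hg2
    rw [map_sum, map_zero] at h
    simp only [map_sum, MvPolynomial.pderiv_mul, MvPolynomial.pderiv_C, zero_mul, zero_add] at h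
    simp only [Matrix.vecMul, dotProduct, Matrix.of_apply, Pi.zero_apply]
    rw [key t]
    exact h
  have hG0 := Matrix.eq_zero_of_vecMul_eq_zero hjac hG
  have hrel : ∀ k i, d k i + d i k = 0 := by
    intro k i
    have hk := congrFun hG0 k
    exact congrFun (aux_pfaff_indep p hjac _ hk) i
  intro s
  obtain ⟨⟨i, j⟩, hij⟩ := s
  have hij' : i ≤ j := hij
  have hgd : g ⟨(i, j), hij⟩ = d i j := by
    simp only [hd]
    rw [dif_pos hij']
  rcases eq_or_lt_of_le hij' with h | h
  · obtain rfl : i = j := h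
    have := hrel i i
    rw [← two_mul] at this
    rw [hgd]
    exact (mul_eq_zero.mp this).resolve_left h2
  · have hzero : d j i = 0 := by
      simp only [hd]
      exact dif_neg (not_le.mpr h)
    have := hrel i j
    rw [hzero, add_zero] at this
    rw [hgd]; exact this
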